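/- Let f : ℝⁿ → ℝ be twice differentiable with gradient g = ∇f and Hessian ∇²f Lipschitz continuous in operator norm with constant L, let μ > 0 and τ > 0. Define F(y) = g(y) − P_{[−μ,μ]}(g(y) − y/τ) and F_q(x;y) = g(x) + ∇²f(x)(y − x) − P_{[−μ,μ]}(g(x) + ∇²f(x)(y − x) − y/τ). Then for all x, y ∈ ℝⁿ, ‖F(y) − F_q(x;y)‖ ≤ 2‖g(y) − g(x) − ∇²f(x)(y − x)‖ ≤ L‖x − y‖². -/

import Mathlib

open scoped RealInnerProductSpace

variable {n : ℕ}
local notation "E" => EuclideanSpace ℝ (Fin n)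
local notation "CLM" => Matrix.toEuclideanCLM (𝕜 := ℝ)

lemma clamp_lip (μ r s : ℝ) :
    |max (-μ) (min μ r) - max (-μ) (min μ s)| ≤ |r - s| := by
  refine (abs_max_sub_max_le_max _ _ _ _).trans ?_
  have h2 : |min μ r - min μ s| ≤ |r - s| := by
    simpa using abs_min_sub_min_le_max μ r μ s
  simpa using h2

/-- `‖F(y) - F_q(x;y)‖ ≤ 2‖g(y) - g(x) - ∇²f(x)(y-x)‖ ≤ L‖x-y‖²`
when the Hessian is `L`-Lipschitz in operator norm. -/
theorem stmt_12
    (f : E → ℝ) (g : E → E) (hg : ∀ y, HasGradientAt f (g y) y)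
    (Hess : E → Matrix (Fin n) (Fin n) ℝ)
    (hHess : ∀ y, HasFDerivAt g (CLM (Hess y)) y)
    (L : ℝ) (hL : ∀ a b : E, ‖CLM (Hess a) - CLM (Hess b)‖ ≤ L * ‖a - b‖)
    (μ τ : ℝ) (hμ : 0 < μ) (hτ : 0 < τ)
    (F : E → E)
    (hF : ∀ y i, F y i = g y i - max (-μ) (min μ (g y i - y i / τ)))
    (Fq : E → E → E)
    (hFq : ∀ x y i, Fq x y i =
      g x i + CLM (Hess x) (y - x) i -
        max (-μ) (min μ (g x i + CLM (Hess x) (y - x) i - y i / τ)))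
    (x y : E) :
    ‖F y - Fq x y‖ ≤ 2 * ‖g y - g x - CLM (Hess x) (y - x)‖ ∧
    2 * ‖g y - g x - CLM (Hess x) (y - x)‖ ≤ L * ‖x - y‖ ^ 2 := by
  set A := CLM (Hess x) with hA
  set e : E := g y - g x - A (y - x) with he
  constructor
  · -- componentwise bound
    have hcomp : ∀ i, ‖(F y - Fq x y) i‖ ≤ 2 * ‖e i‖ := by
      intro i
      have hei : e i = g y i - (g x i + A (y - x) i) := by
        simp [he, PiLp.sub_apply]; ring
      have hdi : (F y - Fq x y) i = e i -
          (max (-μ) (min μ (g y i - y i / τ)) -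
           max (-μ) (min μ (g x i + A (y - x) i - y i / τ))) := by
        simp [PiLp.sub_apply, hF, hFq, hei, hA]; ring
      rw [hdi]
      have hlip := clamp_lip μ (g y i - y i / τ) (g x i + A (y - x) i - y i / τ)
      have : (g y i - y i / τ) - (g x i + A (y - x) i - y i / τ) = e i := by
        rw [hei]; ring
      rw [this] at hlip
      calc ‖e i - (max (-μ) (min μ (g y i - y i / τ)) -
           max (-μ) (min μ (g x i + A (y - x) i - y i / τ)))‖
          ≤ ‖e i‖ + ‖max (-μ) (min μ (g y i - y i / τ)) -
           max (-μ) (min μ (g x i + A (y - x) i - y i / τ))‖ := norm_sub_le _ _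
        _ ≤ ‖e i‖ + ‖e i‖ := by
            exact add_le_add le_rfl (by simpa [Real.norm_eq_abs] using hlip)
        _ = 2 * ‖e i‖ := by ring
    rw [EuclideanSpace.norm_eq, EuclideanSpace.norm_eq]
    rw [show (2 : ℝ) * Real.sqrt (∑ i, ‖e i‖ ^ 2)
        = Real.sqrt (4 * ∑ i, ‖e i‖ ^ 2) by
      rw [show (4:ℝ) = 2^2 by norm_num, Real.sqrt_mul (by positivity),
        Real.sqrt_sq (by norm_num)]]
    refine Real.sqrt_le_sqrt ?_
    rw [Finset.mul_sum]
    refine Finset.sum_le_sum fun i _ => ?_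
    have := hcomp i
    nlinarith [norm_nonneg ((F y - Fq x y) i), norm_nonneg (e i)]
  · -- Taylor remainder bound
    set v : E := y - x with hv
    set φ : ℝ → E := fun t => g (x + t • v) - g x - t • (A v) with hφ
    have hφ' : ∀ t : ℝ, HasDerivAt φ ((CLM (Hess (x + t • v)) - A) v) t := by
      intro t
      have hc : HasDerivAt (fun t : ℝ => x + t • v) v t := by
        simpa using ((hasDerivAt_id t).smul_const v).const_add x
      have h1 : HasDerivAt (fun t : ℝ => g (x + t • v))
          (CLM (Hess (x + t • v)) v) t :=
        (hHess (x + t • v)).comp_hasDerivAt t hc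
      have h2 : HasDerivAt (fun t : ℝ => g x + t • (A v))
          (A v) t := by
        simpa using ((hasDerivAt_id t).smul_const (A v)).const_add (g x)
      have := h1.sub h2
      have heq : φ = (fun t : ℝ => g (x + t • v)) - fun t : ℝ => g x + t • (A v) := by
        funext s; simp only [hφ, Pi.sub_apply, sub_sub]
      rw [heq, ContinuousLinearMap.sub_apply]; exact this
    have hB : ∀ t : ℝ, HasDerivAt (fun t => L * ‖v‖ ^ 2 * (t ^ 2 / 2))
        (L * ‖v‖ ^ 2 * t) t := by
      intro t
      have : HasDerivAt (fun t : ℝ => t ^ 2 / 2) t t := by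
        simpa using ((hasDerivAt_pow 2 t).div_const 2)
      simpa using this.const_mul (L * ‖v‖ ^ 2)
    have key : ∀ t ∈ Set.Icc (0:ℝ) 1, ‖φ t‖ ≤ L * ‖v‖ ^ 2 * (t ^ 2 / 2) := by
      refine image_norm_le_of_norm_deriv_right_le_deriv_boundary
        (f := φ) (f' := fun t => (CLM (Hess (x + t • v)) - A) v)
        (fun t _ => (hφ' t).continuousAt.continuousWithinAt)
        (fun t ht => (hφ' t).hasDerivWithinAt) ?_ hB ?_
      · simp [hφ]
      · intro t ht
        have h1 : ‖(CLM (Hess (x + t • v)) - A) v‖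
            ≤ ‖CLM (Hess (x + t • v)) - A‖ * ‖v‖ :=
          ContinuousLinearMap.le_opNorm _ _
        have h2 : ‖CLM (Hess (x + t • v)) - A‖ ≤ L * ‖x + t • v - x‖ := hL _ _
        have h3 : ‖x + t • v - x‖ = t * ‖v‖ := by
          simp [norm_smul, Real.norm_eq_abs, abs_of_nonneg ht.1]
        calc ‖(CLM (Hess (x + t • v)) - A) v‖
            ≤ ‖CLM (Hess (x + t • v)) - A‖ * ‖v‖ := h1
          _ ≤ (L * ‖x + t • v - x‖) * ‖v‖ :=
              mul_le_mul_of_nonneg_right h2 (norm_nonneg v)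
          _ = L * ‖v‖ ^ 2 * t := by rw [h3]; ring
    have hfin := key 1 (by norm_num)
    have hφ1 : φ 1 = g y - g x - A v := by simp [hφ, hv]
    rw [hφ1] at hfin
    have hnorm : ‖v‖ = ‖x - y‖ := by rw [hv, norm_sub_rev]
    rw [hnorm] at hfin
    rw [he, hv]
    nlinarith [hfin]
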